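/- arXiv:1711.08825 — 4 statements merged into one kernel-verified Lean document; each statement's English description precedes it below -/
import Mathlib

section
/- Let K, L be convex bodies in ℝⁿ containing the origin. Then the map T : K → L defined by T(x) = ‖x‖_K · ν_L⁻¹(ν_K(x/‖x‖_K)) for x ≠ 0 (and T(0) = 0), where ‖·‖_K is the Minkowski gauge of K and ν_K, ν_L are the Gauss maps, satisfies (Id + tT)(K) = K + tL for all t ≥ 0. -/
open scoped RealInnerProductSpace Pointwise

/-- At every frontier point of a closed convex body with `0` in its interior there is a
unit outer normal. -/
lemma exists_unit_support_point {n : ℕ} (M : Set (EuclideanSpace ℝ (Fin n)))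
    (hM : Convex ℝ M) (h0 : 0 ∈ interior M) {z : EuclideanSpace ℝ (Fin n)}
    (hz : z ∉ interior M) :
    ∃ u : EuclideanSpace ℝ (Fin n), ‖u‖ = 1 ∧ ∀ w ∈ M, ⟪w, u⟫ ≤ ⟪z, u⟫ := by
  obtain ⟨f, hf⟩ := geometric_hahn_banach_open_point (hM.interior) isOpen_interior hz
  have hfz : 0 < f z := by simpa using hf 0 h0
  have hle : ∀ w ∈ M, f w ≤ f z := by
    intro w hw
    by_contra h
    push_neg at h
    have hfw : 0 < f w := hfz.trans h
    set c : ℝ := f z / f w with hc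
    have hc0 : 0 ≤ c := le_of_lt (div_pos hfz hfw)
    have hc1 : c < 1 := (div_lt_one hfw).2 h
    have hmem : c • w ∈ interior M := by
      have := hM.combo_closure_interior_mem_interior (subset_closure hw) h0 hc0
        (by linarith : (0:ℝ) < 1 - c) (by ring)
      simpa using this
    have := hf _ hmem
    rw [map_smul] at this
    simp only [smul_eq_mul, hc] at this
    rw [div_mul_cancel₀ _ (ne_of_gt hfw)] at this
    exact lt_irrefl _ this
  set v : EuclideanSpace ℝ (Fin n) :=
    (InnerProductSpace.toDual ℝ (EuclideanSpace ℝ (Fin n))).symm f with hv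
  have hvf : ∀ x, ⟪v, x⟫ = f x := fun x => InnerProductSpace.toDual_symm_apply
  have hvne : v ≠ 0 := by
    intro h
    have := hvf z
    rw [h] at this
    simp only [inner_zero_left] at this
    exact (ne_of_gt hfz) this.symm
  have hvf' : ∀ x : EuclideanSpace ℝ (Fin n), ⟪x, v⟫ = f x := by
    intro x; rw [real_inner_comm]; exact hvf x
  refine ⟨‖v‖⁻¹ • v, ?_, ?_⟩
  · rw [norm_smul, norm_inv, norm_norm, inv_mul_cancel₀ (norm_ne_zero_iff.2 hvne)]
  · intro w hw
    rw [real_inner_smul_right, real_inner_smul_right, hvf', hvf']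
    exact mul_le_mul_of_nonneg_left (hle w hw) (inv_nonneg.2 (norm_nonneg v))

/-- Let `K, L` be compact convex bodies in `ℝⁿ` with `0` in their
interiors, with strictly convex smooth boundaries encoded by the Gauss map `ν_K` of `K`
(unique outer unit normal at every boundary point) and the inverse Gauss map `ν_L⁻¹` of
`L` (unique support point for every unit direction). Then the map
`T(x) = ‖x‖_K · ν_L⁻¹(ν_K(x/‖x‖_K))` (with `T(0) = 0`, `‖·‖_K` being the Minkowski
gauge of `K`) satisfies `(Id + tT)(K) = K + tL` for all `t ≥ 0`. -/
theorem minkowski_sum_via_gauge_map {n : ℕ}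
    (K L : Set (EuclideanSpace ℝ (Fin n)))
    (hKconv : Convex ℝ K) (hKcomp : IsCompact K) (hK0 : 0 ∈ interior K)
    (hLconv : Convex ℝ L) (hLcomp : IsCompact L) (hL0 : 0 ∈ interior L)
    (νK νLinv : EuclideanSpace ℝ (Fin n) → EuclideanSpace ℝ (Fin n))
    (hνK : ∀ x ∈ frontier K, ‖νK x‖ = 1 ∧ ∀ z ∈ K, ⟪z, νK x⟫ ≤ ⟪x, νK x⟫)
    (hνKuniq : ∀ x ∈ frontier K, ∀ u : EuclideanSpace ℝ (Fin n),
      ‖u‖ = 1 → (∀ z ∈ K, ⟪z, u⟫ ≤ ⟪x, u⟫) → u = νK x)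
    (hνLinv : ∀ u : EuclideanSpace ℝ (Fin n), ‖u‖ = 1 →
      νLinv u ∈ frontier L ∧ ∀ z ∈ L, ⟪z, u⟫ ≤ ⟪νLinv u, u⟫)
    (hνLuniq : ∀ u : EuclideanSpace ℝ (Fin n), ‖u‖ = 1 →
      ∀ z ∈ L, ⟪z, u⟫ = ⟪νLinv u, u⟫ → z = νLinv u)
    (T : EuclideanSpace ℝ (Fin n) → EuclideanSpace ℝ (Fin n))
    (hT : ∀ x : EuclideanSpace ℝ (Fin n), x ≠ 0 →
      T x = gauge K x • νLinv (νK ((gauge K x)⁻¹ • x)))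
    (hT0 : T 0 = 0)
    (t : ℝ) (ht : 0 ≤ t) :
    (fun x => x + t • T x) '' K = K + t • L := by
  have hKcl : IsClosed K := hKcomp.isClosed
  have hLcl : IsClosed L := hLcomp.isClosed
  have hK0' : (0 : EuclideanSpace ℝ (Fin n)) ∈ K := interior_subset hK0
  have hL0' : (0 : EuclideanSpace ℝ (Fin n)) ∈ L := interior_subset hL0
  have hKnhds : K ∈ nhds (0 : EuclideanSpace ℝ (Fin n)) := mem_interior_iff_mem_nhds.1 hK0
  have hKabs : Absorbent ℝ K := absorbent_nhds_zero hKnhds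
  have hKbdd : Bornology.IsVonNBounded ℝ K :=
    (NormedSpace.isVonNBounded_iff ℝ).2 hKcomp.isBounded
  rcases eq_or_lt_of_le ht with rfl | htpos
  · -- t = 0
    have h1 : (fun x : EuclideanSpace ℝ (Fin n) => x + (0:ℝ) • T x) '' K = K := by
      simp only [zero_smul, add_zero, Set.image_id']
    have h2 : K + (0:ℝ) • L = K := by
      rw [Set.zero_smul_set ⟨0, hL0'⟩, add_zero]
    rw [h1, h2]
  · -- t > 0
    set M := K + t • L with hM
    have hKsubM : K ⊆ M := by
      intro a ha
      have : a + t • (0 : EuclideanSpace ℝ (Fin n)) ∈ M :=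
        Set.add_mem_add ha (Set.smul_mem_smul_set hL0')
      simpa using this
    have hMconv : Convex ℝ M := hKconv.add (hLconv.smul t)
    have hMcomp : IsCompact M := hKcomp.add (hLcomp.smul t)
    have hM0 : (0 : EuclideanSpace ℝ (Fin n)) ∈ interior M :=
      interior_mono hKsubM hK0
    have hMnhds : M ∈ nhds (0 : EuclideanSpace ℝ (Fin n)) := mem_interior_iff_mem_nhds.1 hM0
    have hMabs : Absorbent ℝ M := absorbent_nhds_zero hMnhds
    have hMbdd : Bornology.IsVonNBounded ℝ M :=
      (NormedSpace.isVonNBounded_iff ℝ).2 hMcomp.isBounded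
    apply Set.Subset.antisymm
    · -- image ⊆ K + tL
      rintro _ ⟨x, hx, rfl⟩
      show x + t • T x ∈ M
      by_cases hx0 : x = 0
      · subst hx0
        rw [hT0, smul_zero, add_zero]
        exact hKsubM hK0'
      · set lam := gauge K x with hlam
        have hlampos : 0 < lam := (gauge_pos hKabs hKbdd).2 hx0
        have hlam1 : lam ≤ 1 := gauge_le_one_of_mem hx
        have hy : gauge K (lam⁻¹ • x) = 1 := by
          rw [gauge_smul_of_nonneg (inv_nonneg.2 hlampos.le), smul_eq_mul,
            inv_mul_cancel₀ (ne_of_gt hlampos)]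
        have hyfr : lam⁻¹ • x ∈ frontier K :=
          (gauge_eq_one_iff_mem_frontier hKconv hKnhds).1 hy
        have hu : ‖νK (lam⁻¹ • x)‖ = 1 := (hνK _ hyfr).1
        have hwL : νLinv (νK (lam⁻¹ • x)) ∈ L :=
          hLcl.frontier_subset (hνLinv _ hu).1
        have hlw : lam • νLinv (νK (lam⁻¹ • x)) ∈ L := by
          have := hLconv hL0' hwL (by linarith : (0:ℝ) ≤ 1 - lam) hlampos.le (by ring)
          simpa using this
        have : x + t • T x = x + t • (lam • νLinv (νK (lam⁻¹ • x))) := by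
          rw [hT x hx0, ← hlam]
        rw [this]
        exact Set.add_mem_add hx (Set.smul_mem_smul_set hlw)
    · -- K + tL ⊆ image
      intro z hz
      by_cases hz0 : z = 0
      · exact ⟨0, hK0', by simp [hT0, hz0]⟩
      · set mu := gauge M z with hmu
        have hmupos : 0 < mu := (gauge_pos hMabs hMbdd).2 hz0
        have hmu1 : mu ≤ 1 := gauge_le_one_of_mem hz
        have hz' : gauge M (mu⁻¹ • z) = 1 := by
          rw [gauge_smul_of_nonneg (inv_nonneg.2 hmupos.le), smul_eq_mul,
            inv_mul_cancel₀ (ne_of_gt hmupos)]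
        have hz'fr : mu⁻¹ • z ∈ frontier M :=
          (gauge_eq_one_iff_mem_frontier hMconv hMnhds).1 hz'
        obtain ⟨u, hu, hsupp⟩ := exists_unit_support_point M hMconv hM0 hz'fr.2
        have hz'M : mu⁻¹ • z ∈ M := hMcomp.isClosed.frontier_subset hz'fr
        obtain ⟨a, ha, c, hc, hsum⟩ := Set.mem_add.1 hz'M
        obtain ⟨b, hb, rfl⟩ := hc
        -- a maximizes ⟪·, u⟫ over K
        have hKa : ∀ a' ∈ K, ⟪a', u⟫ ≤ ⟪a, u⟫ := by
          intro a' ha'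
          have h1 : a' + t • b ∈ M := Set.add_mem_add ha' (Set.smul_mem_smul_set hb)
          have h2 := hsupp _ h1
          rw [← hsum, inner_add_left, inner_add_left] at h2
          linarith
        -- b maximizes ⟪·, u⟫ over L
        have hLb : ∀ b' ∈ L, ⟪b', u⟫ ≤ ⟪b, u⟫ := by
          intro b' hb'
          have h1 : a + t • b' ∈ M := Set.add_mem_add ha (Set.smul_mem_smul_set hb')
          have h2 := hsupp _ h1
          rw [← hsum, inner_add_left, inner_add_left, real_inner_smul_left,
            real_inner_smul_left] at h2
          have h3 : t * ⟪b', u⟫ ≤ t * ⟪b, u⟫ := by linarith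
          exact (mul_le_mul_iff_right₀ htpos).1 h3
        have hbeq : b = νLinv u := by
          refine hνLuniq u hu b hb (le_antisymm ((hνLinv u hu).2 b hb) ?_)
          exact hLb _ (hLcl.frontier_subset (hνLinv u hu).1)
        have hafr : a ∈ frontier K := by
          refine ⟨subset_closure ha, fun hint => ?_⟩
          obtain ⟨ε, hε, hball⟩ := Metric.mem_nhds_iff.1 (mem_interior_iff_mem_nhds.1 hint)
          have hmem : a + (ε / 2) • u ∈ K := by
            apply hball
            rw [Metric.mem_ball, dist_eq_norm]
            have : a + (ε / 2) • u - a = (ε / 2) • u := by abel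
            rw [this, norm_smul, hu, mul_one, Real.norm_eq_abs, abs_of_pos (by linarith)]
            linarith
          have := hKa _ hmem
          rw [inner_add_left, real_inner_smul_left, real_inner_self_eq_norm_sq, hu] at this
          nlinarith
        have hueq : u = νK a := hνKuniq a hafr u hu hKa
        have hane : a ≠ 0 := by
          intro h
          exact hafr.2 (h ▸ hK0)
        have hga : gauge K a = 1 := (gauge_eq_one_iff_mem_frontier hKconv hKnhds).2 hafr
        refine ⟨mu • a, ?_, ?_⟩
        · have := hKconv hK0' ha (by linarith : (0:ℝ) ≤ 1 - mu) hmupos.le (by ring)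
          simpa using this
        · show mu • a + t • T (mu • a) = z
          have hxne : mu • a ≠ 0 := smul_ne_zero (ne_of_gt hmupos) hane
          have hgx : gauge K (mu • a) = mu := by
            rw [gauge_smul_of_nonneg hmupos.le, smul_eq_mul, hga, mul_one]
          rw [hT _ hxne, hgx, inv_smul_smul₀ (ne_of_gt hmupos), ← hueq, ← hbeq]
          show mu • a + t • mu • b = z
          rw [smul_comm t mu b, ← smul_add, hsum, smul_inv_smul₀ (ne_of_gt hmupos)]
end

section
/- Let V : (0, ∞) → (0, ∞) be a twice differentiable increasing function and let 1/N ∈ (−∞, 1/n] with N ∉ (0, n). If t ↦ N·V(t)^{1/N} is concave (i.e. (V^{1/N})'' ≤ 0, equivalently V·V'' ≤ (1 − 1/N)(V')²), then the function v ↦ (I(v))^{N/(N−1)}/v is non-increasing on the range of V, where I := V' ∘ V⁻¹. -/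
open Set

private lemma deriv_nonneg_of_strictMonoOn {V : ℝ → ℝ}
    (hVmono : StrictMonoOn V (Ioi 0))
    (hV1 : ∀ t ∈ Ioi (0 : ℝ), DifferentiableAt ℝ V t)
    {t : ℝ} (ht : t ∈ Ioi (0 : ℝ)) : 0 ≤ deriv V t := by
  have hslope : Filter.Tendsto (slope V t) (nhdsWithin t (Ioi t)) (nhds (deriv V t)) :=
    (hasDerivAt_iff_tendsto_slope.mp (hV1 t ht).hasDerivAt).mono_left
      (nhdsWithin_mono t fun y hy => ne_of_gt hy)
  refine ge_of_tendsto hslope ?_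
  filter_upwards [self_mem_nhdsWithin] with y hy
  rw [slope_def_field]
  have h0y : (0 : ℝ) < y := lt_trans ht hy
  have := hVmono ht h0y hy
  have hyt : (0 : ℝ) < y - t := sub_pos.mpr hy
  exact div_nonneg (by linarith) hyt.le

/-- If the derivative of `V` vanishes somewhere on `(0,∞)`, and
`t ↦ V(t)^(a-1) * V'(t)` is antitone and nonneg, then `V` is not strictly monotone;
hence under our hypotheses the derivative is positive. -/
private lemma deriv_pos_aux {V : ℝ → ℝ} {N : ℝ} (hN0 : N ≠ 0)
    (hVpos : ∀ t ∈ Ioi (0 : ℝ), 0 < V t)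
    (hVmono : StrictMonoOn V (Ioi 0))
    (hV1 : ∀ t ∈ Ioi (0 : ℝ), DifferentiableAt ℝ V t)
    (hV2 : ∀ t ∈ Ioi (0 : ℝ), DifferentiableAt ℝ (deriv V) t)
    (hconc : ∀ t ∈ Ioi (0 : ℝ),
      V t * deriv (deriv V) t ≤ (1 - 1 / N) * (deriv V t) ^ 2)
    {t : ℝ} (ht : t ∈ Ioi (0 : ℝ)) : 0 < deriv V t := by
  set a : ℝ := 1 / N with ha_def
  set D : ℝ → ℝ := fun s => (V s) ^ (a - 1) * deriv V s with hD_def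
  -- derivative of D
  have hDderiv : ∀ s ∈ Ioi (0 : ℝ), HasDerivAt D
      (deriv V s * (a - 1) * (V s) ^ (a - 1 - 1) * deriv V s
        + (V s) ^ (a - 1) * deriv (deriv V) s) s := by
    intro s hs
    exact (((hV1 s hs).hasDerivAt.rpow_const (Or.inl (hVpos s hs).ne')).mul
      (hV2 s hs).hasDerivAt)
  -- D has nonpositive derivative
  have hDkey : ∀ s ∈ Ioi (0 : ℝ), deriv D s ≤ 0 := by
    intro s hs
    rw [(hDderiv s hs).deriv]
    have hP : 0 < V s := hVpos s hs
    have hPa : (V s) ^ (a - 1) = (V s) ^ (a - 1 - 1) * V s := by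
      rw [← Real.rpow_add_one hP.ne' (a - 1 - 1)]; ring_nf
    have hQ : 0 < (V s) ^ (a - 1 - 1) := Real.rpow_pos_of_pos hP _
    have hc := hconc s hs
    have hinner : (a - 1) * (deriv V s) ^ 2 + V s * deriv (deriv V) s ≤ 0 := by
      rw [ha_def]; linarith
    calc deriv V s * (a - 1) * (V s) ^ (a - 1 - 1) * deriv V s
          + (V s) ^ (a - 1) * deriv (deriv V) s
        = (V s) ^ (a - 1 - 1) * ((a - 1) * (deriv V s) ^ 2 + V s * deriv (deriv V) s) := by
          rw [hPa]; ring
      _ ≤ 0 := mul_nonpos_of_nonneg_of_nonpos hQ.le hinner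
  have hDanti : AntitoneOn D (Ioi 0) := by
    refine antitoneOn_of_deriv_nonpos (convex_Ioi 0) ?_ ?_ ?_
    · exact fun s hs => ((hDderiv s hs).differentiableAt).continuousAt.continuousWithinAt
    · intro s hs
      rw [interior_Ioi] at hs
      exact ((hDderiv s hs).differentiableAt).differentiableWithinAt
    · intro s hs
      rw [interior_Ioi] at hs
      exact hDkey s hs
  -- now the main argument
  rcases (deriv_nonneg_of_strictMonoOn hVmono hV1 ht).lt_or_eq with h | h
  · exact h
  exfalso
  have hDt0 : D t = 0 := by rw [hD_def]; simp [← h]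
  have hzero : ∀ s ∈ Ioo t (t + 1), deriv V s = 0 := by
    intro s hs
    have hs0 : s ∈ Ioi (0 : ℝ) := lt_trans ht hs.1
    have h1 : D s ≤ 0 := by
      have := hDanti ht hs0 hs.1.le
      rwa [hDt0] at this
    have h2 : 0 ≤ D s :=
      mul_nonneg (Real.rpow_pos_of_pos (hVpos s hs0) _).le
        (deriv_nonneg_of_strictMonoOn hVmono hV1 hs0)
    have hDs : D s = 0 := le_antisymm h1 h2
    have hQ : (0:ℝ) < (V s) ^ (a - 1) := Real.rpow_pos_of_pos (hVpos s hs0) _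
    rw [hD_def] at hDs
    exact (mul_eq_zero.mp hDs).resolve_left hQ.ne'
  have hVanti : AntitoneOn V (Icc t (t + 1)) := by
    refine antitoneOn_of_deriv_nonpos (convex_Icc _ _) ?_ ?_ ?_
    · intro s hs
      have hs0 : s ∈ Ioi (0 : ℝ) := lt_of_lt_of_le ht hs.1
      exact (hV1 s hs0).continuousAt.continuousWithinAt
    · intro s hs
      rw [interior_Icc] at hs
      exact (hV1 s (lt_trans ht hs.1)).differentiableWithinAt
    · intro s hs
      rw [interior_Icc] at hs
      rw [hzero s hs]
  have hle : V (t + 1) ≤ V t :=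
    hVanti (left_mem_Icc.mpr (by linarith)) ⟨by linarith, le_refl _⟩ (by linarith)
  have hlt : V t < V (t + 1) := hVmono ht (by simp only [mem_Ioi] at ht ⊢; linarith) (lt_add_one t)
  linarith

/-- Let `V : (0,∞) → (0,∞)` be a twice differentiable increasing
function, and let `1/N ∈ (−∞, 1/n]` with `N ∉ (0, n)` (and `N ≠ 1`). If
`t ↦ N·V(t)^{1/N}` is concave, equivalently `V·V'' ≤ (1 − 1/N)(V')²`, then
`v ↦ I(v)^{N/(N−1)} / v` is non-increasing on the range of `V`, where
`I := V' ∘ V⁻¹`. -/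
theorem isoperimetric_profile_monotone (n N : ℝ) (hn : 1 ≤ n)
    (hN : n ≤ N ∨ N ≤ 0) (hN1 : N ≠ 1)
    (V : ℝ → ℝ) (hVpos : ∀ t ∈ Ioi (0 : ℝ), 0 < V t)
    (hVmono : StrictMonoOn V (Ioi 0))
    (hV1 : ∀ t ∈ Ioi (0 : ℝ), DifferentiableAt ℝ V t)
    (hV2 : ∀ t ∈ Ioi (0 : ℝ), DifferentiableAt ℝ (deriv V) t)
    (hconc : ∀ t ∈ Ioi (0 : ℝ),
      V t * deriv (deriv V) t ≤ (1 - 1 / N) * (deriv V t) ^ 2) :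
    AntitoneOn
      (fun v => (deriv V (Function.invFunOn V (Ioi 0) v)) ^ (N / (N - 1)) / v)
      (V '' Ioi 0) := by
  have himpos : ∀ v ∈ V '' Ioi 0, 0 < v := by
    rintro v ⟨t, ht, rfl⟩; exact hVpos t ht
  by_cases hN0 : N = 0
  · subst hN0
    intro v1 hv1 v2 hv2 h12
    simp only [zero_div, Real.rpow_zero]
    exact one_div_le_one_div_of_le (himpos v1 hv1) h12
  have hN1' : N - 1 ≠ 0 := sub_ne_zero.mpr hN1
  set p := N / (N - 1) with hp_def
  have hp_pos : 0 < p := by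
    rcases hN with h | h
    · have h1 : 1 < N := lt_of_le_of_ne (hn.trans h) (Ne.symm hN1)
      exact div_pos (by linarith) (by linarith)
    · have h0 : N < 0 := lt_of_le_of_ne h hN0
      exact div_pos_of_neg_of_neg (by linarith) (by linarith)
  have hp1 : p * (1 - 1 / N) = 1 := by
    rw [hp_def]; field_simp
  have hDpos : ∀ t ∈ Ioi (0 : ℝ), 0 < deriv V t :=
    fun t ht => deriv_pos_aux hN0 hVpos hVmono hV1 hV2 hconc ht
  -- the function g(t) = (V'(t))^p / V(t) and its derivative
  set g : ℝ → ℝ := fun t => (deriv V t) ^ p / V t with hg_def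
  have hgderiv : ∀ t ∈ Ioi (0 : ℝ), HasDerivAt g
      ((deriv (deriv V) t * p * (deriv V t) ^ (p - 1) * V t
        - (deriv V t) ^ p * deriv V t) / (V t) ^ 2) t := by
    intro t ht
    exact ((hV2 t ht).hasDerivAt.rpow_const (Or.inl (hDpos t ht).ne')).div
      (hV1 t ht).hasDerivAt (hVpos t ht).ne'
  have hgkey : ∀ t ∈ Ioi (0 : ℝ), deriv g t ≤ 0 := by
    intro t ht
    rw [(hgderiv t ht).deriv]
    have hE : 0 < deriv V t := hDpos t ht
    have hP : 0 < V t := hVpos t ht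
    have hEp : (deriv V t) ^ p = (deriv V t) ^ (p - 1) * deriv V t := by
      rw [← Real.rpow_add_one hE.ne' (p - 1)]; ring_nf
    have hQ : 0 < (deriv V t) ^ (p - 1) := Real.rpow_pos_of_pos hE _
    have hc := hconc t ht
    have hinner : p * deriv (deriv V) t * V t - (deriv V t) ^ 2 ≤ 0 := by
      nlinarith [mul_le_mul_of_nonneg_left hc hp_pos.le]
    have hnum : deriv (deriv V) t * p * (deriv V t) ^ (p - 1) * V t
        - (deriv V t) ^ p * deriv V t ≤ 0 := by
      calc deriv (deriv V) t * p * (deriv V t) ^ (p - 1) * V t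
            - (deriv V t) ^ p * deriv V t
          = (deriv V t) ^ (p - 1) * (p * deriv (deriv V) t * V t - (deriv V t) ^ 2) := by
            rw [hEp]; ring
        _ ≤ 0 := mul_nonpos_of_nonneg_of_nonpos hQ.le hinner
    exact div_nonpos_of_nonpos_of_nonneg hnum (sq_nonneg _)
  have hganti : AntitoneOn g (Ioi 0) := by
    refine antitoneOn_of_deriv_nonpos (convex_Ioi 0) ?_ ?_ ?_
    · exact fun t ht => ((hgderiv t ht).differentiableAt).continuousAt.continuousWithinAt
    · intro t ht
      rw [interior_Ioi] at ht
      exact ((hgderiv t ht).differentiableAt).differentiableWithinAt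
    · intro t ht
      rw [interior_Ioi] at ht
      exact hgkey t ht
  -- transfer along the inverse function
  intro v1 hv1 v2 hv2 h12
  have hex1 : ∃ a ∈ Ioi (0:ℝ), V a = v1 := by
    rcases hv1 with ⟨t, ht, rfl⟩; exact ⟨t, ht, rfl⟩
  have hex2 : ∃ a ∈ Ioi (0:ℝ), V a = v2 := by
    rcases hv2 with ⟨t, ht, rfl⟩; exact ⟨t, ht, rfl⟩
  set t1 := Function.invFunOn V (Ioi 0) v1 with ht1_def
  set t2 := Function.invFunOn V (Ioi 0) v2 with ht2_def
  have hmem1 : t1 ∈ Ioi (0:ℝ) := Function.invFunOn_mem hex1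
  have hmem2 : t2 ∈ Ioi (0:ℝ) := Function.invFunOn_mem hex2
  have heq1 : V t1 = v1 := Function.invFunOn_eq hex1
  have heq2 : V t2 = v2 := Function.invFunOn_eq hex2
  have hle : t1 ≤ t2 := by
    by_contra h
    push_neg at h
    have := hVmono hmem2 hmem1 h
    rw [heq1, heq2] at this
    exact absurd h12 (not_le.mpr this)
  have := hganti hmem1 hmem2 hle
  simpa only [hg_def, heq1, heq2] using this
end

section
/- Under the hypotheses: (M,g,μ) satisfies CD(ρ,N), 0 ≤ II_{∂M} ≤ H_μ g₀ on ∂M, and R^M_g(·,ν,·,ν) ≤ κ g₀ as 2-tensors on T∂M, the boundary weighted manifold (∂M, g₀, μ_{∂M}) satisfies CD(ρ−κ, N−1). -/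
open scoped RealInnerProductSpace

/-- (Corollary 5.2: curvature-dimension of the boundary.)
Pointwise formulation on the tangent space `E = T_x(∂M)` (of dimension `n − 1`) of a
boundary point, identifying `2`-tensors with endomorphisms of `E` via the induced
metric `g₀` (so `g₀ = id`).  With `RicM_g`, `HessVM` the (restricted) Ricci tensor
and Hessian of `V` on `M`, `dV` the (restricted) differential of `V`,
`Rν = R^M_g(·,ν,·,ν)|_{T∂M}`, `II` the second fundamental form, `Hg` the mean
curvature, `Vν = ⟨∇V, ν⟩`, `Hμ = Hg − Vν`, and the boundary tensors `RicB_g`,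
`HessVB` determined by the Gauss equation and the boundary Hessian identity:
if `(M, g, μ)` satisfies `CD(ρ, N)` (restricted to tangential directions),
`0 ≤ II ≤ H_μ·g₀`, and `R^M_g(·,ν,·,ν) ≤ κ·g₀` on `T∂M`, then
`(∂M, g₀, μ_{∂M})` satisfies `CD(ρ − κ, N − 1)`:
`Ric^{∂M} + Hess^{∂M}V − dV⊗dV/((N−1)−(n−1)) ≥ (ρ − κ)·g₀`. -/
theorem boundary_curvature_dimension
    {n : ℕ} {E : Type*} [NormedAddCommGroup E] [InnerProductSpace ℝ E]
    [FiniteDimensional ℝ E] (hdim : Module.finrank ℝ E + 1 = n)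
    (N ρ κ Hg Vν : ℝ) (hNn : N ≠ (n : ℝ))
    (RicM_g HessVM Rν II RicB_g HessVB : E →ₗ[ℝ] E) (dV : E →ₗ[ℝ] ℝ)
    (hIIsymm : LinearMap.IsSymmetric II)
    (hGauss : RicB_g = RicM_g - Rν + (Hg • LinearMap.id - II) ∘ₗ II)
    (hHess : HessVB = HessVM - Vν • II)
    (hCD : ∀ x : E, ρ * ‖x‖ ^ 2 ≤ ⟪(RicM_g + HessVM) x, x⟫ - dV x ^ 2 / (N - n))
    (hIIpsd : ∀ x : E, 0 ≤ ⟪II x, x⟫)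
    (hIIub : ∀ x : E, ⟪II x, x⟫ ≤ (Hg - Vν) * ‖x‖ ^ 2)
    (hRν : ∀ x : E, ⟪Rν x, x⟫ ≤ κ * ‖x‖ ^ 2) :
    ∀ x : E, (ρ - κ) * ‖x‖ ^ 2 ≤
      ⟪(RicB_g + HessVB) x, x⟫ - dV x ^ 2 / ((N - 1) - ((n : ℝ) - 1)) := by

  intro x
  have hEq : (N - 1) - ((n : ℝ) - 1) = N - n := by ring
  rw [hEq]
  set a : ℝ := ⟪II x, x⟫ with ha
  set b : ℝ := ⟪II x, II x⟫ with hb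
  set c : ℝ := ⟪II (II x), II x⟫ with hc
  have ha0 : 0 ≤ a := hIIpsd x
  have hb0 : 0 ≤ b := real_inner_self_nonneg
  -- Cauchy–Schwarz for the PSD form of II : b^2 ≤ a * c
  have hquad : ∀ t : ℝ, 0 ≤ c * (t * t) + (2 * b) * t + a := by
    intro t
    have h := hIIpsd (x + t • II x)
    have hsym : ⟪II (II x), x⟫ = b := by
      rw [hIIsymm (II x) x]
    simp only [map_add, map_smul, inner_add_left, inner_add_right, inner_smul_left,
      inner_smul_right, RCLike.ofReal_real_eq_id, id_eq, conj_trivial] at h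
    rw [hsym, ← ha, ← hb, ← hc] at h
    nlinarith [h]
  have hdisc := discrim_le_zero hquad
  have hbac : b ^ 2 ≤ a * c := by
    unfold discrim at hdisc; nlinarith [hdisc]
  have hcub : c ≤ (Hg - Vν) * b := by
    have := hIIub (II x)
    have : c ≤ (Hg - Vν) * ‖II x‖ ^ 2 := this
    rwa [← real_inner_self_eq_norm_sq] at this
  have haub : a ≤ (Hg - Vν) * ‖x‖ ^ 2 := hIIub x
  -- a^2 ≤ b * ‖x‖^2 by Cauchy–Schwarz
  have hcs : a ^ 2 ≤ b * ‖x‖ ^ 2 := by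
    have h1 : |⟪II x, x⟫| ≤ ‖II x‖ * ‖x‖ := abs_real_inner_le_norm (II x) x
    have h2 : b = ‖II x‖ ^ 2 := real_inner_self_eq_norm_sq (II x)
    nlinarith [h1, norm_nonneg (II x), norm_nonneg x, le_abs_self a, neg_abs_le a,
      sq_abs a]
  -- key: b ≤ (Hg - Vν) * a
  have hkey : b ≤ (Hg - Vν) * a := by
    rcases eq_or_lt_of_le hb0 with hb' | hb'
    · have hb0' : b = 0 := hb'.symm
      have ha0' : a = 0 := by nlinarith [hcs, sq_nonneg a]
      simp [hb0', ha0']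
    · have : b ^ 2 ≤ a * ((Hg - Vν) * b) := by nlinarith [mul_le_mul_of_nonneg_left hcub ha0]
      nlinarith
  -- expand the boundary tensors
  have hexp : ⟪(RicB_g + HessVB) x, x⟫
      = ⟪(RicM_g + HessVM) x, x⟫ - ⟪Rν x, x⟫ + (Hg * a - b) - Vν * a := by
    rw [hGauss, hHess]
    have hsym : ⟪II (II x), x⟫ = b := by rw [hIIsymm (II x) x]
    simp only [LinearMap.add_apply, LinearMap.sub_apply, LinearMap.comp_apply,
      LinearMap.smul_apply, LinearMap.id_apply, inner_add_left, inner_sub_left,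
      inner_smul_left, RCLike.ofReal_real_eq_id, id_eq, conj_trivial]
    rw [hsym]
    ring
  have hCDx := hCD x
  have hRx := hRν x
  rw [hexp]
  nlinarith [hkey, hCDx, hRx]
end

section
/- Let (M,g,μ) satisfy CD(ρ,N), suppose R^M_g(·,ν,·,ν) ≤ κ g₀ on T∂M, II_{∂M} ≥ σ g₀ with σ ≥ 0, ⟨∇V, ν⟩ ≤ 0 on ∂M, and H_g ≥ ξ on ∂M. Then (∂M, g₀, μ_{∂M}) satisfies CD(ρ − κ + σ(ξ − σ), N−1). In particular, since always H_g ≥ (n−1)σ, it satisfies CD(ρ − κ + (n−2)σ², N−1). -/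
open scoped RealInnerProductSpace

lemma spectral_key {E : Type*} [NormedAddCommGroup E] [InnerProductSpace ℝ E]
    [FiniteDimensional ℝ E] (II : E →ₗ[ℝ] E) (hsym : LinearMap.IsSymmetric II)
    (σ : ℝ) (hσ : 0 ≤ σ) (hlb : ∀ x : E, σ * ‖x‖ ^ 2 ≤ ⟪II x, x⟫)
    (hm : 2 ≤ Module.finrank ℝ E) :
    (Module.finrank ℝ E : ℝ) * σ ≤ LinearMap.trace ℝ E II ∧
      ∀ x : E, σ * (LinearMap.trace ℝ E II - σ) * ‖x‖ ^ 2 ≤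
        LinearMap.trace ℝ E II * ⟪II x, x⟫ - ⟪II x, II x⟫ := by
  set m := Module.finrank ℝ E with hm'
  have hrank : Module.finrank ℝ E = m := rfl
  set b := hsym.eigenvectorBasis hrank with hb
  set μ := hsym.eigenvalues hrank with hμdef
  -- eigenvalue lower bound
  have hbnorm : ∀ i, ‖b i‖ = 1 := fun i => b.orthonormal.1 i
  have hμσ : ∀ i, σ ≤ μ i := by
    intro i
    have h := hlb (b i)
    rw [hsym.apply_eigenvectorBasis hrank i] at h
    rw [← hb, ← hμdef] at h
    simpa [real_inner_smul_left, real_inner_self_eq_norm_sq, hbnorm i] using h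
  -- trace = sum of eigenvalues
  have htr : LinearMap.trace ℝ E II = ∑ i, μ i := by
    rw [LinearMap.trace_eq_matrix_trace ℝ b.toBasis, Matrix.trace]
    apply Finset.sum_congr rfl
    intro i _
    rw [Matrix.diag_apply, LinearMap.toMatrix_apply]
    have hev := hsym.apply_eigenvectorBasis hrank i
    rw [← hb, ← hμdef] at hev
    simp [hev, Module.Basis.repr_self]
  set Hg := LinearMap.trace ℝ E II with hHg
  have hcard : (Finset.univ : Finset (Fin m)).card = m := by simp
  have htrlb : (m : ℝ) * σ ≤ Hg := by
    rw [htr]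
    calc (m : ℝ) * σ = ∑ _i : Fin m, σ := by simp [mul_comm]
    _ ≤ ∑ i, μ i := Finset.sum_le_sum fun i _ => hμσ i
  -- Hg - μ i ≥ σ
  have hne : ∀ i : Fin m, σ ≤ Hg - μ i := by
    intro i
    have hsplit : Hg = μ i + ∑ j ∈ Finset.univ.erase i, μ j := by
      rw [htr, ← Finset.add_sum_erase _ _ (Finset.mem_univ i)]
    have hcard' : (Finset.univ.erase i).card = m - 1 := by simp
    have h1 : ((m - 1 : ℕ) : ℝ) * σ ≤ ∑ j ∈ Finset.univ.erase i, μ j := by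
      calc ((m - 1 : ℕ) : ℝ) * σ = ∑ _j ∈ Finset.univ.erase i, σ := by
            simp [hcard', mul_comm]
      _ ≤ _ := Finset.sum_le_sum fun j _ => hμσ j
    have h2 : (1 : ℝ) ≤ ((m - 1 : ℕ) : ℝ) := by
      have : (1 : ℕ) ≤ m - 1 := by omega
      exact_mod_cast this
    nlinarith [h1, h2, hσ]
  refine ⟨htrlb, fun x => ?_⟩
  set c : Fin m → ℝ := fun i => b.repr x i with hc
  have hrepr : ∀ i, ⟪b i, x⟫ = c i := fun i => (b.repr_apply_apply x i).symm
  have hreprII : ∀ i, ⟪b i, II x⟫ = μ i * c i := fun i =>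
    (b.repr_apply_apply (II x) i).symm.trans
      (hsym.eigenvectorBasis_apply_self_apply hrank x i)
  have hrepr' : ∀ i, ⟪x, b i⟫ = c i := fun i => (real_inner_comm _ _).trans (hrepr i)
  have hreprII' : ∀ i, ⟪II x, b i⟫ = μ i * c i := fun i =>
    (real_inner_comm _ _).trans (hreprII i)
  have hx : ‖x‖ ^ 2 = ∑ i, c i ^ 2 := by
    rw [← real_inner_self_eq_norm_sq, ← b.sum_inner_mul_inner x x]
    exact Finset.sum_congr rfl fun i _ => by rw [hrepr' i, hrepr i]; ring
  have hIx : ⟪II x, x⟫ = ∑ i, μ i * c i ^ 2 := by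
    rw [real_inner_comm, ← b.sum_inner_mul_inner x (II x)]
    exact Finset.sum_congr rfl fun i _ => by rw [hrepr' i, hreprII i]; ring
  have hIIx : ⟪II x, II x⟫ = ∑ i, (μ i * c i) ^ 2 := by
    rw [← b.sum_inner_mul_inner (II x) (II x)]
    exact Finset.sum_congr rfl fun i _ => by rw [hreprII' i, hreprII i]; ring
  rw [hx, hIx, hIIx, Finset.mul_sum, Finset.mul_sum, ← Finset.sum_sub_distrib]
  apply Finset.sum_le_sum
  intro i _
  nlinarith [mul_nonneg (mul_nonneg (sub_nonneg.2 (hμσ i))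
    (by linarith [hne i] : (0:ℝ) ≤ Hg - σ - μ i)) (sq_nonneg (c i))]

/-- (Proposition 5.4.)  Pointwise formulation on the tangent space
`E = T_x(∂M)` (of dimension `n − 1`, `n ≥ 3`) of a boundary point, identifying
`2`-tensors with endomorphisms of `E` via the induced metric `g₀` (so `g₀ = id`).
With `RicM_g`, `HessVM` the (restricted) Ricci tensor and Hessian of `V` on `M`,
`dV` the (restricted) differential of `V`, `Rν = R^M_g(·,ν,·,ν)|_{T∂M}`, `II` the
second fundamental form, `Hg = tr(II)` the mean curvature, `Vν = ⟨∇V, ν⟩`, and the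
boundary tensors `RicB_g`, `HessVB` determined by the Gauss equation and the boundary
Hessian identity: if `(M, g, μ)` satisfies `CD(ρ, N)` (restricted to tangential
directions), `R^M_g(·,ν,·,ν) ≤ κ·g₀`, `II ≥ σ·g₀` with `σ ≥ 0`, `⟨∇V, ν⟩ ≤ 0`, and
`H_g ≥ ξ`, then `(∂M, g₀, μ_{∂M})` satisfies `CD(ρ − κ + σ(ξ − σ), N − 1)`; in
particular (since always `H_g ≥ (n−1)σ`), it satisfies
`CD(ρ − κ + (n−2)σ², N − 1)`. -/
theorem boundary_curvature_dimension_trace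
    {n : ℕ} {E : Type*} [NormedAddCommGroup E] [InnerProductSpace ℝ E]
    [FiniteDimensional ℝ E] (hdim : Module.finrank ℝ E + 1 = n) (hn : 3 ≤ n)
    (N ρ κ σ ξ Vν : ℝ) (hNn : N ≠ (n : ℝ))
    (RicM_g HessVM Rν II RicB_g HessVB : E →ₗ[ℝ] E) (dV : E →ₗ[ℝ] ℝ)
    (hIIsymm : LinearMap.IsSymmetric II)
    (hGauss : RicB_g = RicM_g - Rν +
      ((LinearMap.trace ℝ E II) • LinearMap.id - II) ∘ₗ II)
    (hHess : HessVB = HessVM - Vν • II)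
    (hCD : ∀ x : E, ρ * ‖x‖ ^ 2 ≤ ⟪(RicM_g + HessVM) x, x⟫ - dV x ^ 2 / (N - n))
    (hRν : ∀ x : E, ⟪Rν x, x⟫ ≤ κ * ‖x‖ ^ 2)
    (hσ : 0 ≤ σ) (hIIlb : ∀ x : E, σ * ‖x‖ ^ 2 ≤ ⟪II x, x⟫)
    (hVν : Vν ≤ 0) (hξ : ξ ≤ LinearMap.trace ℝ E II) :
    (∀ x : E, (ρ - κ + σ * (ξ - σ)) * ‖x‖ ^ 2 ≤
        ⟪(RicB_g + HessVB) x, x⟫ - dV x ^ 2 / ((N - 1) - ((n : ℝ) - 1))) ∧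
      (∀ x : E, (ρ - κ + ((n : ℝ) - 2) * σ ^ 2) * ‖x‖ ^ 2 ≤
        ⟪(RicB_g + HessVB) x, x⟫ - dV x ^ 2 / ((N - 1) - ((n : ℝ) - 1))) := by
  have hm2 : 2 ≤ Module.finrank ℝ E := by omega
  obtain ⟨htrlb, hkey⟩ := spectral_key II hIIsymm σ hσ hIIlb hm2
  set Hg := LinearMap.trace ℝ E II with hHgdef
  have hdiv : (N - 1) - ((n : ℝ) - 1) = N - (n : ℝ) := by ring
  have hcast : ((Module.finrank ℝ E : ℝ)) = (n : ℝ) - 1 := by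
    have : ((n : ℝ)) = (Module.finrank ℝ E : ℝ) + 1 := by exact_mod_cast hdim.symm
    linarith
  have hQ : ∀ x : E, ⟪(RicB_g + HessVB) x, x⟫ =
      ⟪(RicM_g + HessVM) x, x⟫ - ⟪Rν x, x⟫ + (Hg * ⟪II x, x⟫ - ⟪II x, II x⟫)
        - Vν * ⟪II x, x⟫ := by
    intro x
    have hs : ⟪II (II x), x⟫ = ⟪II x, II x⟫ := hIIsymm (II x) x
    simp only [hGauss, hHess, LinearMap.add_apply, LinearMap.sub_apply,
      LinearMap.comp_apply, LinearMap.smul_apply, LinearMap.id_coe, id_eq,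
      inner_add_left, inner_sub_left, real_inner_smul_left, hs]
    ring
  have hHgnσ : ((n : ℝ) - 1) * σ ≤ Hg := by rw [← hcast]; exact htrlb
  constructor <;> intro x <;>
    [skip; skip] <;>
    · have h1 := hCD x
      have h2 := hRν x
      have h3 := hkey x
      have h4 := hIIlb x
      have h5 : 0 ≤ ⟪II x, x⟫ := le_trans (mul_nonneg hσ (sq_nonneg _)) h4
      have h6 : 0 ≤ -Vν * ⟪II x, x⟫ := mul_nonneg (by linarith) h5
      rw [hQ x, hdiv]
      nlinarith [mul_nonneg (mul_nonneg hσ (sub_nonneg.2 hξ)) (sq_nonneg ‖x‖),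
        mul_nonneg (mul_nonneg hσ (by linarith : (0:ℝ) ≤ Hg - ((n:ℝ)-1)*σ)) (sq_nonneg ‖x‖),
        sq_nonneg ‖x‖]
end
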